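/- Let Γ be a countable group, (X,T) a Γ-dynamical system, U a finite open cover of X, F a finite subset of Γ, and d ∈ ℕ. Suppose for every 1 ≤ j ≤ d and γ ∈ F there is a closed set K_{j,γ} ⊆ X such that (i) for every x ∈ X, ord(U,x) ≤ Σ_{j=1}^d Σ_{γ∈F} 1_{K_{j,γ}}(x), and (ii) for each fixed j, the sets T_γ(K_{j,γ}), γ ∈ F, are pairwise disjoint. Then for every T-invariant Borel probability measure μ on X, ∫_X ord(U,x) dμ(x) ≤ d. -/

import Mathlib

open MeasureTheory Set
open scoped ENNReal Classical

/-- The order of a finite collection of sets at a point: (number of members containing x) − 1. -/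
noncomputable def ordAt {X : Type*} (V : Finset (Set X)) (x : X) : ℝ :=
  ((V.filter fun A => x ∈ A).card : ℝ) - 1

/-- A finite open cover. -/
def IsOpenCover {X : Type*} [TopologicalSpace X] (U : Finset (Set X)) : Prop :=
  (∀ A ∈ U, IsOpen A) ∧ ⋃₀ (U : Set (Set X)) = Set.univ

/-- `Refines U V` : every element of `V` is contained in some element of `U` (V ⪰ U). -/
def Refines {X : Type*} (U V : Finset (Set X)) : Prop :=
  ∀ B ∈ V, ∃ A ∈ U, B ⊆ A

/-- The set of T-invariant Borel probability measures. -/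
def invProb {X Γ : Type*} [TopologicalSpace X] [MeasurableSpace X]
    (T : Γ → X ≃ₜ X) : Set (ProbabilityMeasure X) :=
  {μ | ∀ γ : Γ, (μ : Measure X).map (T γ) = (μ : Measure X)}

/-- The capacity of a Borel set with respect to the action:
cap(A,T) = sup over invariant μ of μ(A). -/
noncomputable def cap {X Γ : Type*} [TopologicalSpace X] [MeasurableSpace X]
    (T : Γ → X ≃ₜ X) (A : Set X) : ℝ≥0∞ :=
  ⨆ μ ∈ invProb T, (μ : Measure X) A

/-- dim(X,T) = sup over finite open covers U of inf over finite open covers V refining U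
of sup over invariant μ of ∫ ord(V,x) dμ(x). -/
noncomputable def dimDyn {X Γ : Type*} [TopologicalSpace X] [MeasurableSpace X]
    (T : Γ → X ≃ₜ X) : ℝ≥0∞ :=
  ⨆ U ∈ {U : Finset (Set X) | IsOpenCover U},
    ⨅ V ∈ {V : Finset (Set X) | IsOpenCover V ∧ Refines U V},
      ⨆ μ ∈ invProb T, ENNReal.ofReal (∫ x, ordAt V x ∂(μ : Measure X))

/-- Counting lemma: if ord(U,·) is dominated by the sum of indicators of closed sets
K_{j,γ} (j ≤ d, γ ∈ F), and for each j the sets T_γ(K_{j,γ}), γ ∈ F, are pairwise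
disjoint, then ∫ ord(U,x) dμ ≤ d for every invariant probability measure μ. -/
theorem stmt14 {X Γ : Type*} [MetricSpace X] [CompactSpace X] [MeasurableSpace X] [BorelSpace X]
    [Group Γ] [Countable Γ] (T : Γ → X ≃ₜ X)
    (hT : ∀ γ γ' : Γ, ∀ x : X, T (γ * γ') x = T γ (T γ' x))
    (U : Finset (Set X)) (hU : IsOpenCover U)
    (F : Finset Γ) (d : ℕ) (K : Fin d → Γ → Set X)
    (hKclosed : ∀ j : Fin d, ∀ γ ∈ F, IsClosed (K j γ))
    (hord : ∀ x : X, ordAt U x ≤ ∑ j : Fin d, ∑ γ ∈ F, Set.indicator (K j γ) (fun _ => (1:ℝ)) x)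
    (hdisj : ∀ j : Fin d, ∀ γ ∈ F, ∀ γ' ∈ F, γ ≠ γ' →
      Disjoint ((T γ) '' K j γ) ((T γ') '' K j γ'))
    (μ : ProbabilityMeasure X) (hμ : μ ∈ invProb T) :
    (∫ x, ordAt U x ∂(μ : Measure X)) ≤ d := by
  classical
  have hmeasK : ∀ j : Fin d, ∀ γ ∈ F, MeasurableSet (K j γ) :=
    fun j γ hγ => (hKclosed j γ hγ).measurableSet
  have hmeasImg : ∀ j : Fin d, ∀ γ ∈ F, MeasurableSet ((T γ) '' K j γ) := by
    intro j γ hγ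
    exact (((hKclosed j γ hγ).isCompact.image (T γ).continuous).isClosed).measurableSet
  -- indicator integrability
  have hintK : ∀ j : Fin d, ∀ γ ∈ F,
      Integrable (Set.indicator (K j γ) (fun _ => (1:ℝ))) (μ : Measure X) := by
    intro j γ hγ
    exact (integrable_indicator_iff (hmeasK j γ hγ)).2
      (integrableOn_const (measure_ne_top _ _))
  have hintf : Integrable
      (fun x => ∑ j : Fin d, ∑ γ ∈ F, Set.indicator (K j γ) (fun _ => (1:ℝ)) x)
      (μ : Measure X) := by
    apply integrable_finset_sum
    intro j _
    exact integrable_finset_sum _ (fun γ hγ => hintK j γ hγ)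
  have hordeq : ∀ x, ordAt U x = (∑ A ∈ U, Set.indicator A (fun _ => (1:ℝ)) x) - 1 := by
    intro x
    unfold ordAt
    congr 1
    rw [show (∑ A ∈ U, Set.indicator A (fun _ => (1:ℝ)) x)
        = ∑ A ∈ U, if x ∈ A then (1:ℝ) else 0 from
      Finset.sum_congr rfl (fun A _ => by simp [Set.indicator_apply])]
    rw [Finset.sum_boole]
  have hintOrd : Integrable (fun x => ordAt U x) (μ : Measure X) := by
    have : Integrable (fun x => (∑ A ∈ U, Set.indicator A (fun _ => (1:ℝ)) x) - 1)
        (μ : Measure X) := by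
      apply Integrable.sub _ (integrable_const 1)
      apply integrable_finset_sum
      intro A hA
      exact (integrable_indicator_iff ((hU.1 A hA).measurableSet)).2
        (integrableOn_const (measure_ne_top _ _))
    simpa [hordeq] using this
  have hstep : (∫ x, ordAt U x ∂(μ : Measure X)) ≤
      ∫ x, ∑ j : Fin d, ∑ γ ∈ F, Set.indicator (K j γ) (fun _ => (1:ℝ)) x ∂(μ : Measure X) :=
    integral_mono hintOrd hintf hord
  have hsum : (∫ x, ∑ j : Fin d, ∑ γ ∈ F, Set.indicator (K j γ) (fun _ => (1:ℝ)) x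
      ∂(μ : Measure X)) = ∑ j : Fin d, ∑ γ ∈ F, ((μ : Measure X) (K j γ)).toReal := by
    rw [integral_finset_sum _ (fun j _ => integrable_finset_sum _ (fun γ hγ => hintK j γ hγ))]
    refine Finset.sum_congr rfl (fun j _ => ?_)
    rw [integral_finset_sum _ (fun γ hγ => hintK j γ hγ)]
    refine Finset.sum_congr rfl (fun γ hγ => ?_)
    rw [integral_indicator (hmeasK j γ hγ)]
    simp
    rfl
  -- invariance: μ(K) = μ(T γ '' K)
  have hinv : ∀ j : Fin d, ∀ γ ∈ F,
      (μ : Measure X) (K j γ) = (μ : Measure X) ((T γ) '' K j γ) := by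
    intro j γ hγ
    conv_rhs => rw [← hμ γ]
    rw [Measure.map_apply (T γ).continuous.measurable (hmeasImg j γ hγ),
      Set.preimage_image_eq _ (T γ).injective]
  have key : ∀ j : Fin d, ∑ γ ∈ F, (μ : Measure X) (K j γ) ≤ 1 := by
    intro j
    calc ∑ γ ∈ F, (μ : Measure X) (K j γ)
        = ∑ γ ∈ F, (μ : Measure X) ((T γ) '' K j γ) :=
          Finset.sum_congr rfl (fun γ hγ => hinv j γ hγ)
      _ = (μ : Measure X) (⋃ γ ∈ F, (T γ) '' K j γ) := by
          rw [measure_biUnion_finset ?_ (fun γ hγ => hmeasImg j γ hγ)]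
          intro γ hγ γ' hγ' hne
          exact hdisj j γ hγ γ' hγ' hne
      _ ≤ (μ : Measure X) Set.univ := measure_mono (Set.subset_univ _)
      _ = 1 := measure_univ
  have keyR : ∀ j : Fin d, ∑ γ ∈ F, ((μ : Measure X) (K j γ)).toReal ≤ 1 := by
    intro j
    rw [← ENNReal.toReal_sum (fun γ hγ => measure_ne_top _ _)]
    have := ENNReal.toReal_mono (by norm_num) (key j)
    simpa using this
  calc (∫ x, ordAt U x ∂(μ : Measure X))
      ≤ ∑ j : Fin d, ∑ γ ∈ F, ((μ : Measure X) (K j γ)).toReal := by rw [← hsum]; exact hstep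
    _ ≤ ∑ _j : Fin d, (1:ℝ) := Finset.sum_le_sum (fun j _ => keyR j)
    _ = d := by simp
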